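/- The absolute error loss L(p, p̂) = |p - p̂| on [0,1]² has no linear equivalent: there is no function L̃(p, p̂) affine in p such that |p - p̂| - L̃(p, p̂) is independent of p̂. -/

import Mathlib

/-- The absolute error loss `L(p,p̂) = |p - p̂|` on `[0,1]²` has no linear
equivalent: there is no `L̃` affine in `p` such that `|p - p̂| - L̃(p,p̂)`
depends only on `p`. -/
theorem stmt3 :
    ¬ ∃ (Lt : ℝ → ℝ → ℝ) (d : ℝ → ℝ),
      (∀ phat ∈ Set.Icc (0:ℝ) 1, ∃ a b : ℝ, ∀ p ∈ Set.Icc (0:ℝ) 1,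
        Lt p phat = a * p + b) ∧
      (∀ p ∈ Set.Icc (0:ℝ) 1, ∀ phat ∈ Set.Icc (0:ℝ) 1,
        |p - phat| - Lt p phat = d p) := by
  rintro ⟨Lt, d, hA, hE⟩
  obtain ⟨a0, b0, h0⟩ := hA 0 (by norm_num)
  obtain ⟨a1, b1, h1⟩ := hA (1/2) (by norm_num)
  have key : ∀ p ∈ Set.Icc (0:ℝ) 1,
      |p - 1/2| - |p - 0| = (a1 - a0) * p + (b1 - b0) := by
    intro p hp
    have e0 := hE p hp 0 (by norm_num)
    have e1 := hE p hp (1/2) (by norm_num)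
    rw [h0 p hp] at e0
    rw [h1 p hp] at e1
    linarith
  have k0 := key 0 (by norm_num)
  have k1 := key (1/2) (by norm_num)
  have k2 := key 1 (by norm_num)
  norm_num at k0 k1 k2
  have h : |(1/2:ℝ)| = 1/2 := by norm_num
  linarith
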